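/- Let L > 0, K > 0, l > 0, β > 0, and let κ, ň : [0, L] → ℝ be continuous with κ ≥ 0, and N₀ ∈ ℝ. Let ε, σ : [0, L] → ℝ be differentiable with ε(0) = σ(0) = 0, ε'(ξ) = −κ(ξ) σ(ξ), and σ'(ξ) = K l (ň(ξ) − N₀ + ň(ξ) ε(ξ)) on [0, L]. Define B(ξ) := |β K l ň(ξ) − κ(ξ)|/(2√β) and let A ≥ K l √β · sup_{ξ ∈ [0,L]} |ň(ξ) − N₀|. Then |ε(ξ)| ≤ A ∫₀^ξ exp(∫_η^ξ B(ζ) dζ) dη for all ξ ∈ [0, L]. -/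

import Mathlib

open MeasureTheory intervalIntegral Real Set

set_option maxHeartbeats 1000000 in
/-- Bound on the Jacobian deviation `ε = J − 1` obtained from the Liapunov
function `V = ε² + β σ²` and the square-root Gronwall estimate. -/
theorem jacobian_deviation_bound
    (L K l β N₀ A : ℝ) (hL : 0 < L) (hK : 0 < K) (hl : 0 < l) (hβ : 0 < β)
    (κ nCheck : ℝ → ℝ)
    (hκ_cont : ContinuousOn κ (Set.Icc (0:ℝ) L))
    (hnCheck_cont : ContinuousOn nCheck (Set.Icc (0:ℝ) L))
    (hκ_nonneg : ∀ ξ ∈ Set.Icc (0:ℝ) L, 0 ≤ κ ξ)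
    (ε σ : ℝ → ℝ)
    (hε0 : ε 0 = 0) (hσ0 : σ 0 = 0)
    (hε' : ∀ ξ ∈ Set.Icc (0:ℝ) L, HasDerivAt ε (-(κ ξ) * σ ξ) ξ)
    (hσ' : ∀ ξ ∈ Set.Icc (0:ℝ) L,
      HasDerivAt σ (K * l * (nCheck ξ - N₀ + nCheck ξ * ε ξ)) ξ)
    (hA : ∀ ξ ∈ Set.Icc (0:ℝ) L, K * l * Real.sqrt β * |nCheck ξ - N₀| ≤ A) :
    ∀ ξ ∈ Set.Icc (0:ℝ) L,
      |ε ξ| ≤ A * ∫ η in (0:ℝ)..ξ,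
        Real.exp (∫ ζ in η..ξ, |β * K * l * nCheck ζ - κ ζ| / (2 * Real.sqrt β)) := by
  intro ξ₀ hξ₀
  obtain ⟨hξ₀0, hξ₀L⟩ := hξ₀
  have h0L : (0:ℝ) ∈ Icc (0:ℝ) L := ⟨le_refl _, hL.le⟩
  set sqβ := Real.sqrt β with hsqβdef
  have hsqβ : 0 < sqβ := Real.sqrt_pos.mpr hβ
  have hsqβ2 : sqβ ^ 2 = β := Real.sq_sqrt hβ.le
  have hA0 : 0 ≤ A := le_trans (by positivity) (hA 0 h0L)
  set B : ℝ → ℝ := fun ζ => |β * K * l * nCheck ζ - κ ζ| / (2 * sqβ) with hBdef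
  have hBcont : ContinuousOn B (Icc 0 L) :=
    (((continuousOn_const.mul hnCheck_cont).sub hκ_cont).abs).div_const _
  -- continuous extension of B to all of ℝ
  set Bt : ℝ → ℝ := fun x => B (Set.projIcc 0 L hL.le x) with hBtdef
  have hBtc : Continuous Bt := hBcont.restrict.comp continuous_projIcc
  have hBteq : ∀ x ∈ Icc (0:ℝ) L, Bt x = B x := by
    intro x hx; simp only [hBtdef, Set.projIcc_of_mem hL.le hx]
  -- the integrating factor
  set I : ℝ → ℝ := fun x => ∫ t in (0:ℝ)..x, Bt t with hIdef
  have hI : ∀ x, HasDerivAt I (Bt x) x := fun x =>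
    intervalIntegral.integral_hasDerivAt_right (hBtc.intervalIntegrable _ _)
      (hBtc.stronglyMeasurableAtFilter _ _) hBtc.continuousAt
  have hIc : Continuous I := by
    rw [continuous_iff_continuousAt]; exact fun x => (hI x).continuousAt
  have hEc : Continuous fun x => Real.exp (-I x) := (hIc.neg).rexp
  set Jf : ℝ → ℝ := fun u => ∫ η in (0:ℝ)..u, Real.exp (-I η) with hJfdef
  have hJ : ∀ x, HasDerivAt Jf (Real.exp (-I x)) x := fun x =>
    intervalIntegral.integral_hasDerivAt_right (hEc.intervalIntegrable _ _)
      (hEc.stronglyMeasurableAtFilter _ _) hEc.continuousAt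
  -- main Gronwall estimate, for each δ > 0
  have key : ∀ δ : ℝ, 0 < δ →
      |ε ξ₀| ≤ (δ + A * Jf ξ₀) * Real.exp (I ξ₀) := by
    intro δ hδ
    set V : ℝ → ℝ := fun x => ε x ^ 2 + β * σ x ^ 2 + δ ^ 2 with hVdef
    have hVx : ∀ x, V x = ε x ^ 2 + β * σ x ^ 2 + δ ^ 2 := fun _ => rfl
    have hVpos : ∀ x, 0 < V x := fun x => by rw [hVx]; positivity
    set W : ℝ → ℝ := fun x => Real.sqrt (V x) with hWdef
    have hWpos : ∀ x, 0 < W x := fun x => Real.sqrt_pos.mpr (hVpos x)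
    have hWsq : ∀ x, W x ^ 2 = V x := fun x => Real.sq_sqrt (hVpos x).le
    -- derivative of W on Icc 0 L, with the key differential inequality
    have hW' : ∀ x ∈ Icc (0:ℝ) L, ∃ d, HasDerivAt W d x ∧ d ≤ Bt x * W x + A := by
      intro x hx
      have hVd : HasDerivAt V
          (2 * ε x * (-(κ x) * σ x) +
            β * (2 * σ x * (K * l * (nCheck x - N₀ + nCheck x * ε x)))) x := by
        have h1 : HasDerivAt (fun y => ε y ^ 2) (2 * ε x * (-(κ x) * σ x)) x := by
          simpa [mul_comm] using ((hε' x hx).fun_pow 2)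
        have h2 : HasDerivAt (fun y => σ y ^ 2)
            (2 * σ x * (K * l * (nCheck x - N₀ + nCheck x * ε x))) x := by
          simpa [mul_comm] using ((hσ' x hx).fun_pow 2)
        simpa [hVdef] using ((h1.add (h2.const_mul β)).add_const (δ ^ 2))
      have hWd : HasDerivAt W
          (1 / (2 * Real.sqrt (V x)) *
            (2 * ε x * (-(κ x) * σ x) +
              β * (2 * σ x * (K * l * (nCheck x - N₀ + nCheck x * ε x))))) x :=
        (Real.hasDerivAt_sqrt (hVpos x).ne').comp x hVd
      refine ⟨_, hWd, ?_⟩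
      rw [hBteq x hx]
      set e := ε x with hedef
      set s := σ x with hsdef
      set k := κ x with hkdef
      set n := nCheck x with hndef
      set M := |β * K * l * n - k| with hMdef
      set D := |n - N₀| with hDdef
      have hM0 : 0 ≤ M := abs_nonneg _
      have hD0 : 0 ≤ D := abs_nonneg _
      have hAx : K * l * sqβ * D ≤ A := hA x hx
      have hWx := hWpos x
      have hWsqx := hWsq x
      have hes : e ^ 2 + β * s ^ 2 ≤ W x ^ 2 := by
        rw [hWsqx, hVx]; nlinarith [sq_nonneg δ]
      have h1 : |e * s| ≤ W x ^ 2 / (2 * sqβ) := by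
        rw [le_div_iff₀ (by positivity), abs_mul]
        nlinarith [sq_nonneg (|e| - sqβ * |s|), sq_abs e, sq_abs s, abs_nonneg e, abs_nonneg s]
      have h2 : |s| ≤ W x / sqβ := by
        rw [le_div_iff₀ hsqβ]
        nlinarith [abs_nonneg s, sq_abs s, mul_nonneg hsqβ.le (abs_nonneg s)]
      have hBx : B x = M / (2 * sqβ) := rfl
      rw [hBx]
      have hWV : Real.sqrt (V x) = W x := rfl
      rw [hWV, one_div, inv_mul_eq_div, div_le_iff₀ (by positivity : (0:ℝ) < 2 * W x)]
      have t1 : e * s * (β * K * l * n - k) ≤ |e * s| * M :=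
        le_trans (le_abs_self _) (le_of_eq (abs_mul _ _))
      have t2 : s * (n - N₀) ≤ |s| * D :=
        le_trans (le_abs_self _) (le_of_eq (abs_mul _ _))
      calc 2 * e * (-k * s) + β * (2 * s * (K * l * (n - N₀ + n * e)))
          = 2 * (e * s * (β * K * l * n - k)) + 2 * β * K * l * (s * (n - N₀)) := by ring
        _ ≤ 2 * (|e * s| * M) + 2 * β * K * l * (|s| * D) := by
            have c : (0:ℝ) ≤ 2 * β * K * l := by positivity
            have t1' := mul_le_mul_of_nonneg_left t1 (by norm_num : (0:ℝ) ≤ 2)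
            have t2' := mul_le_mul_of_nonneg_left t2 c
            linarith
        _ ≤ 2 * ((W x ^ 2 / (2 * sqβ)) * M) + 2 * β * K * l * ((W x / sqβ) * D) := by
            gcongr
        _ = M / (2 * sqβ) * W x * (2 * W x) + 2 * (sqβ * (K * l * D)) * W x := by
            rw [← hsqβ2]; field_simp
        _ ≤ M / (2 * sqβ) * W x * (2 * W x) + 2 * A * W x := by
            have : sqβ * (K * l * D) ≤ A := by nlinarith
            nlinarith [hWx.le]
        _ = (M / (2 * sqβ) * W x + A) * (2 * W x) := by ring
    -- the function G is nonincreasing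
    set G : ℝ → ℝ := fun u => W u * Real.exp (-I u) - A * Jf u with hGdef
    have hGd : ∀ x ∈ Icc (0:ℝ) L, ∃ g, HasDerivAt G g x ∧ g ≤ 0 := by
      intro x hx
      obtain ⟨d, hd, hdle⟩ := hW' x hx
      have hEd : HasDerivAt (fun u => Real.exp (-I u)) (Real.exp (-I x) * -Bt x) x :=
        ((hI x).neg).exp
      refine ⟨d * Real.exp (-I x) + W x * (Real.exp (-I x) * -Bt x) - A * Real.exp (-I x),
        (hd.mul hEd).sub ((hJ x).const_mul A), ?_⟩
      have hE0 : (0:ℝ) < Real.exp (-I x) := Real.exp_pos _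
      nlinarith [mul_le_mul_of_nonneg_right hdle hE0.le]
    have hGanti : AntitoneOn G (Icc 0 L) := by
      apply antitoneOn_of_deriv_nonpos (convex_Icc _ _)
      · intro x hx
        obtain ⟨g, hg, _⟩ := hGd x hx
        exact hg.continuousAt.continuousWithinAt
      · intro x hx
        obtain ⟨g, hg, _⟩ := hGd x (interior_subset hx)
        exact hg.differentiableAt.differentiableWithinAt
      · intro x hx
        obtain ⟨g, hg, hgle⟩ := hGd x (interior_subset hx)
        rw [hg.deriv]; exact hgle
    have hI0 : I 0 = 0 := intervalIntegral.integral_same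
    have hJf0 : Jf 0 = 0 := intervalIntegral.integral_same
    have hW0 : W 0 = δ := by
      show Real.sqrt (V 0) = δ
      rw [hVx, hε0, hσ0]
      simpa using Real.sqrt_sq hδ.le
    have hG0 : G 0 = δ := by
      show W 0 * Real.exp (-I 0) - A * Jf 0 = δ
      rw [hI0, hJf0, hW0]; simp
    have hGle : G ξ₀ ≤ δ := by
      rw [← hG0]; exact hGanti h0L ⟨hξ₀0, hξ₀L⟩ hξ₀0
    have hWb : W ξ₀ ≤ (δ + A * Jf ξ₀) * Real.exp (I ξ₀) := by
      have h : W ξ₀ * Real.exp (-I ξ₀) ≤ δ + A * Jf ξ₀ := by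
        have : W ξ₀ * Real.exp (-I ξ₀) - A * Jf ξ₀ ≤ δ := hGle
        linarith
      have h2 := mul_le_mul_of_nonneg_right h (Real.exp_nonneg (I ξ₀))
      calc W ξ₀ = W ξ₀ * Real.exp (-I ξ₀) * Real.exp (I ξ₀) := by
            rw [mul_assoc, ← Real.exp_add]; simp
        _ ≤ (δ + A * Jf ξ₀) * Real.exp (I ξ₀) := h2
    have hεW : |ε ξ₀| ≤ W ξ₀ := by
      rw [← Real.sqrt_sq_eq_abs]
      apply Real.sqrt_le_sqrt
      rw [hVx]; nlinarith [sq_nonneg (σ ξ₀), sq_nonneg δ]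
    linarith
  -- pass to the limit δ → 0⁺
  have hmain : |ε ξ₀| ≤ A * Jf ξ₀ * Real.exp (I ξ₀) := by
    apply le_of_forall_pos_le_add
    intro c hc
    have hd : 0 < c * Real.exp (-I ξ₀) := by positivity
    calc |ε ξ₀| ≤ (c * Real.exp (-I ξ₀) + A * Jf ξ₀) * Real.exp (I ξ₀) := key _ hd
      _ = c * (Real.exp (-I ξ₀) * Real.exp (I ξ₀)) + A * Jf ξ₀ * Real.exp (I ξ₀) := by ring
      _ = A * Jf ξ₀ * Real.exp (I ξ₀) + c := by rw [← Real.exp_add]; simp; ring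
  -- rewrite the bound in the required form
  have hrw : Real.exp (I ξ₀) * Jf ξ₀
      = ∫ η in (0:ℝ)..ξ₀, Real.exp (∫ ζ in η..ξ₀, B ζ) := by
    show Real.exp (I ξ₀) * ∫ η in (0:ℝ)..ξ₀, Real.exp (-I η) = _
    rw [← intervalIntegral.integral_const_mul]
    apply intervalIntegral.integral_congr
    intro η hη
    dsimp only
    have hη' : η ∈ Icc (0:ℝ) ξ₀ := by rwa [Set.uIcc_of_le hξ₀0] at hη
    have h1 : Real.exp (I ξ₀) * Real.exp (-I η) = Real.exp (I ξ₀ - I η) := by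
      rw [← Real.exp_add]; ring_nf
    rw [h1]
    congr 1
    have h2 : I ξ₀ - I η = ∫ ζ in η..ξ₀, Bt ζ :=
      intervalIntegral.integral_interval_sub_left (hBtc.intervalIntegrable _ _)
        (hBtc.intervalIntegrable _ _)
    rw [h2]
    apply intervalIntegral.integral_congr
    intro ζ hζ
    have hζ' : ζ ∈ Icc (0:ℝ) L := by
      rw [Set.uIcc_of_le hη'.2] at hζ
      exact ⟨le_trans hη'.1 hζ.1, le_trans hζ.2 hξ₀L⟩
    exact hBteq ζ hζ'
  calc |ε ξ₀| ≤ A * Jf ξ₀ * Real.exp (I ξ₀) := hmain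
    _ = A * (Real.exp (I ξ₀) * Jf ξ₀) := by ring
    _ = A * ∫ η in (0:ℝ)..ξ₀, Real.exp (∫ ζ in η..ξ₀, B ζ) := by rw [hrw]
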